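/- Assume ad < bc, b,d > 0, and λ(x) = lx + k, μ(x) = mx + n are affine with λ, μ > 0 on [a/b, c/d]. Then the functions ψ₁(x) = (K/b) e^{(l/b + m/d)x} (x − a/b)^{al/b² + k/b − 1} (c/d − x)^{cm/d² + n/d} and ψ₂(x) = (K/d) e^{(l/b + m/d)x} (x − a/b)^{al/b² + k/b} (c/d − x)^{cm/d² + n/d − 1} satisfy the stationary system d/dx[(a−bx)ψ₁] = −λψ₁ + μψ₂ and d/dx[(c−dx)ψ₂] = λψ₁ − μψ₂ on (a/b, c/d). -/

import Mathlib

open Set Real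

set_option maxHeartbeats 1000000 in
theorem stmt_14 (a b c d l k m n K : ℝ)
    (hb : 0 < b) (hd : 0 < d) (habcd : a * d < b * c) (hK : 0 < K)
    (hlam : ∀ x ∈ Icc (a/b) (c/d), 0 < l * x + k)
    (hμ : ∀ x ∈ Icc (a/b) (c/d), 0 < m * x + n)
    (ψ₁ ψ₂ : ℝ → ℝ)
    (hψ₁ : ∀ x ∈ Ioo (a/b) (c/d),
      ψ₁ x = (K / b) * Real.exp ((l/b + m/d) * x) *
        (x - a/b) ^ (a*l/b^2 + k/b - 1) * (c/d - x) ^ (c*m/d^2 + n/d))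
    (hψ₂ : ∀ x ∈ Ioo (a/b) (c/d),
      ψ₂ x = (K / d) * Real.exp ((l/b + m/d) * x) *
        (x - a/b) ^ (a*l/b^2 + k/b) * (c/d - x) ^ (c*m/d^2 + n/d - 1)) :
    ∀ x ∈ Ioo (a/b) (c/d),
      HasDerivAt (fun y => (a - b*y) * ψ₁ y)
        (-(l * x + k) * ψ₁ x + (m * x + n) * ψ₂ x) x ∧
      HasDerivAt (fun y => (c - d*y) * ψ₂ y)
        ((l * x + k) * ψ₁ x - (m * x + n) * ψ₂ x) x := by
  intro x hx
  have hb0 : b ≠ 0 := hb.ne'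
  have hd0 : d ≠ 0 := hd.ne'
  have hu : 0 < x - a/b := sub_pos.mpr hx.1
  have hv : 0 < c/d - x := sub_pos.mpr hx.2
  have hu0 : x - a/b ≠ 0 := hu.ne'
  have hv0 : c/d - x ≠ 0 := hv.ne'
  set s : ℝ := a*l/b^2 + k/b - 1 with hs
  set t : ℝ := c*m/d^2 + n/d with ht
  have es : a*l/b^2 + k/b = s + 1 := by rw [hs]; ring
  have et : c*m/d^2 + n/d - 1 = t - 1 := by rw [ht]
  rw [hψ₁ x hx, hψ₂ x hx, es, et]
  -- basic derivatives
  have hE : HasDerivAt (fun y : ℝ => Real.exp ((l/b + m/d) * y))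
      (Real.exp ((l/b + m/d) * x) * (l/b + m/d)) x := by
    simpa using ((hasDerivAt_id x).const_mul (l/b + m/d)).exp
  have hU : HasDerivAt (fun y : ℝ => y - a/b) 1 x := by
    simpa using (hasDerivAt_id x).sub_const (a/b)
  have hV : HasDerivAt (fun y : ℝ => c/d - y) (-1) x := by
    simpa using (hasDerivAt_id x).const_sub (c/d)
  have hUs : ∀ p : ℝ, HasDerivAt (fun y : ℝ => (y - a/b) ^ p)
      (1 * p * (x - a/b) ^ (p - 1)) x := fun p => hU.rpow_const (Or.inl hu0)
  have hVs : ∀ p : ℝ, HasDerivAt (fun y : ℝ => (c/d - y) ^ p)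
      (-1 * p * (c/d - x) ^ (p - 1)) x := fun p => hV.rpow_const (Or.inl hv0)
  -- rpow rewriting identities
  have rUs : (x - a/b) ^ s = (x - a/b) ^ (s-1) * (x - a/b) := by
    rw [← Real.rpow_add_one hu0 (s-1)]; ring_nf
  have rUs1 : (x - a/b) ^ (s+1) = (x - a/b) ^ (s-1) * (x - a/b) * (x - a/b) := by
    rw [← rUs, ← Real.rpow_add_one hu0 s]
  have rUs0 : (x - a/b) ^ (s+1-1) = (x - a/b) ^ (s-1) * (x - a/b) := by
    rw [show s+1-1 = s by ring, rUs]
  have rVt : (c/d - x) ^ t = (c/d - x) ^ (t-1) * (c/d - x) := by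
    rw [← Real.rpow_add_one hv0 (t-1)]; ring_nf
  constructor
  · have h1 : HasDerivAt (fun y : ℝ => a - b*y) (-b) x := by
      simpa using ((hasDerivAt_id x).const_mul b).const_sub a
    have hF := h1.mul (((hE.const_mul (K/b)).mul (hUs s)).mul (hVs t))
    have heq : (fun y => (a - b*y) * ψ₁ y) =ᶠ[nhds x]
        (fun y => (a - b*y) * ((K / b) * Real.exp ((l/b + m/d) * y) *
          (y - a/b) ^ s * (c/d - y) ^ t)) := by
      filter_upwards [Ioo_mem_nhds hx.1 hx.2] with y hy
      rw [hψ₁ y hy]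
    have hF' := hF.congr_of_eventuallyEq heq
    refine hF'.congr_deriv (Eq.symm ?_)
    simp only [Pi.mul_apply]
    have hab : a - b*x = -b * (x - a/b) := by field_simp; ring
    rw [rUs, rUs1, rVt, hab]
    generalize (x - a/b) ^ (s - 1) = U
    generalize (c/d - x) ^ (t - 1) = V
    generalize Real.exp ((l/b + m/d) * x) = E
    rw [hs, ht]
    field_simp
    ring
  · have h1 : HasDerivAt (fun y : ℝ => c - d*y) (-d) x := by
      simpa using ((hasDerivAt_id x).const_mul d).const_sub c
    have hG := h1.mul (((hE.const_mul (K/d)).mul (hUs (s+1))).mul (hVs (t-1)))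
    have heq : (fun y => (c - d*y) * ψ₂ y) =ᶠ[nhds x]
        (fun y => (c - d*y) * ((K / d) * Real.exp ((l/b + m/d) * y) *
          (y - a/b) ^ (s+1) * (c/d - y) ^ (t-1))) := by
      filter_upwards [Ioo_mem_nhds hx.1 hx.2] with y hy
      rw [hψ₂ y hy, es]
    have hG' := hG.congr_of_eventuallyEq heq
    refine hG'.congr_deriv (Eq.symm ?_)
    simp only [Pi.mul_apply]
    have hcd : c - d*x = d * (c/d - x) := by field_simp
    have rVt1 : (c/d - x) ^ (t-1) = (c/d - x) ^ (t-1-1) * (c/d - x) := by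
      rw [← Real.rpow_add_one hv0 (t-1-1)]; ring_nf
    rw [rUs, rUs1, rUs0, rVt, rVt1, hcd]
    generalize (x - a/b) ^ (s - 1) = U
    generalize (c/d - x) ^ (t - 1 - 1) = V
    generalize Real.exp ((l/b + m/d) * x) = E
    rw [hs, ht]
    field_simp
    ring
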